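/- Let Γ be a Powers group and let X be an element of the reduced group C*-algebra C*_λ(Γ) with canonical trace zero, i.e. ⟨X δ_e, δ_e⟩ = 0. Then for every δ > 0 there exist an integer N ≥ 1 and elements γ_1, …, γ_N ∈ Γ such that ‖(1/N) Σ_{j=1}^N λ_Γ(γ_j) X λ_Γ(γ_j)⁻¹‖ < δ. -/

import Mathlib

open scoped ENNReal

noncomputable section

set_option maxHeartbeats 1000000

abbrev l2 (Γ : Type*) := lp (fun _ : Γ => ℂ) 2

def lamAux {Γ : Type*} [Group Γ] (γ : Γ) (f : l2 Γ) : l2 Γ :=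
  ⟨fun x => f (γ⁻¹ * x), by
    apply memℓp_gen
    have h1 : Summable fun i : Γ => ‖f i‖ ^ (2 : ℝ≥0∞).toReal :=
      (lp.memℓp f).summable (by norm_num)
    exact (Equiv.mulLeft γ⁻¹).summable_iff.mpr h1⟩

theorem lamAux_apply {Γ : Type*} [Group Γ] (γ : Γ) (f : l2 Γ) (x : Γ) :
    lamAux γ f x = f (γ⁻¹ * x) := rfl

theorem lamAux_norm {Γ : Type*} [Group Γ] (γ : Γ) (f : l2 Γ) : ‖lamAux γ f‖ = ‖f‖ := by
  rw [lp.norm_eq_tsum_rpow (by norm_num) (lamAux γ f), lp.norm_eq_tsum_rpow (by norm_num) f]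
  congr 1
  have h := (Equiv.mulLeft γ⁻¹).tsum_eq (fun i : Γ => ‖f i‖ ^ (2 : ℝ≥0∞).toReal)
  exact h

def lam (Γ : Type*) [Group Γ] (γ : Γ) : l2 Γ →L[ℂ] l2 Γ :=
  LinearMap.mkContinuous
    { toFun := lamAux γ
      map_add' := fun f g => lp.ext rfl
      map_smul' := fun c f => lp.ext rfl }
    1 (fun f => by rw [one_mul]; exact le_of_eq (lamAux_norm γ f))

def Cred (Γ : Type*) [Group Γ] : Set (l2 Γ →L[ℂ] l2 Γ) :=
  closure (Submodule.span ℂ (Set.range (lam Γ)) : Set (l2 Γ →L[ℂ] l2 Γ))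

def deltaE (Γ : Type*) [Group Γ] : l2 Γ :=
  letI := Classical.decEq Γ
  lp.single 2 (1 : Γ) (1 : ℂ)

def IsPowersGroup (Γ : Type*) [Group Γ] : Prop :=
  ∀ (F : Finset Γ), (1 : Γ) ∉ F → ∀ N : ℕ, 1 ≤ N →
    ∃ (C D : Set Γ) (g : Fin N → Γ),
      C ∪ D = Set.univ ∧ C ∩ D = ∅ ∧
      (∀ f ∈ F, (fun x => f * x) '' C ∩ C = ∅) ∧
      (∀ j k : Fin N, j ≠ k → (fun x => g j * x) '' D ∩ (fun x => g k * x) '' D = ∅)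

namespace PowersAux
variable {Γ : Type*} [Group Γ]

theorem lam_apply (γ : Γ) (f : l2 Γ) (x : Γ) : lam Γ γ f x = f (γ⁻¹ * x) := rfl

theorem lam_norm_apply (γ : Γ) (f : l2 Γ) : ‖lam Γ γ f‖ = ‖f‖ := lamAux_norm γ f

theorem lam_opNorm_le (γ : Γ) : ‖lam Γ γ‖ ≤ 1 :=
  LinearMap.mkContinuous_norm_le _ zero_le_one _

theorem lam_one : lam Γ (1 : Γ) = 1 := by
  refine ContinuousLinearMap.ext fun f => lp.ext (funext fun x => ?_)
  rw [lam_apply]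
  simp

theorem lam_mul (a b : Γ) : lam Γ (a * b) = lam Γ a * lam Γ b := by
  refine ContinuousLinearMap.ext fun f => lp.ext (funext fun x => ?_)
  show f ((a*b)⁻¹ * x) = lam Γ a (lam Γ b f) x
  rw [lam_apply, lam_apply, mul_inv_rev, mul_assoc]

/-- indicator "projection" at vector level -/
noncomputable def Pv (S : Set Γ) (f : l2 Γ) : l2 Γ :=
  ⟨S.indicator f, by
    apply memℓp_gen
    have h1 : Summable fun i : Γ => ‖f i‖ ^ (2 : ℝ≥0∞).toReal :=
      (lp.memℓp f).summable (by norm_num)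
    refine h1.of_nonneg_of_le (fun i => by positivity) (fun i => ?_)
    gcongr
    classical
    rw [Set.indicator_apply]
    split <;> simp⟩

theorem Pv_apply (S : Set Γ) (f : l2 Γ) (x : Γ) : Pv S f x = S.indicator f x := rfl

theorem Pv_norm_le (S : Set Γ) (f : l2 Γ) : ‖Pv S f‖ ≤ ‖f‖ := by
  rw [lp.norm_eq_tsum_rpow (by norm_num) (Pv S f), lp.norm_eq_tsum_rpow (by norm_num) f]
  have hsum : Summable fun i : Γ => ‖f i‖ ^ (2 : ℝ≥0∞).toReal :=
    (lp.memℓp f).summable (by norm_num)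
  have hle : ∀ i : Γ, ‖Pv S f i‖ ^ (2 : ℝ≥0∞).toReal ≤ ‖f i‖ ^ (2 : ℝ≥0∞).toReal := by
    intro i
    gcongr
    classical
    rw [Pv_apply, Set.indicator_apply]
    split <;> simp
  refine Real.rpow_le_rpow (tsum_nonneg fun i => by positivity) ?_ (by norm_num)
  exact (hsum.of_nonneg_of_le (fun i => by positivity) hle).tsum_le_tsum hle hsum

theorem inner_eq_zero_of_disj (u v : l2 Γ) (h : ∀ x, u x = 0 ∨ v x = 0) :
    inner (𝕜 := ℂ) u v = 0 := by
  rw [lp.inner_eq_tsum]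
  have : (fun i : Γ => inner (𝕜 := ℂ) (u i) (v i)) = fun _ => 0 := by
    funext x
    rcases h x with h' | h' <;> simp [h']
  rw [this, tsum_zero]

theorem norm_sum_sq {ι : Type*} (s : Finset ι) (u : ι → l2 Γ)
    (h : ∀ j ∈ s, ∀ k ∈ s, j ≠ k → inner (𝕜 := ℂ) (u j) (u k) = 0) :
    ‖∑ j ∈ s, u j‖ ^ 2 = ∑ j ∈ s, ‖u j‖ ^ 2 := by
  have key : inner (𝕜 := ℂ) (∑ j ∈ s, u j) (∑ j ∈ s, u j)
      = ∑ j ∈ s, inner (𝕜 := ℂ) (u j) (u j) := by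
    rw [sum_inner]
    refine Finset.sum_congr rfl fun j hj => ?_
    rw [inner_sum]
    exact Finset.sum_eq_single j (fun k hk hkj => h j hj k hk (Ne.symm hkj))
      (fun hj' => absurd hj hj')
  have h2 := congrArg (fun z : ℂ => RCLike.re z) key
  simp only [map_sum] at h2
  rw [inner_self_eq_norm_sq (𝕜 := ℂ)] at h2
  rw [h2]
  exact Finset.sum_congr rfl fun j _ => inner_self_eq_norm_sq (𝕜 := ℂ) (u j)

theorem mem_mulimg {a x : Γ} {S : Set Γ} : x ∈ (fun y => a * y) '' S ↔ a⁻¹ * x ∈ S := by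
  constructor
  · rintro ⟨c, hc, rfl⟩; simpa using hc
  · intro h; exact ⟨a⁻¹ * x, h, by simp⟩

theorem Pv_partition {C D : Set Γ} (hU : C ∪ D = Set.univ) (hI : C ∩ D = ∅) (f : l2 Γ) :
    Pv C f + Pv D f = f := by
  refine lp.ext (funext fun x => ?_)
  have hx : x ∈ C ∪ D := hU ▸ Set.mem_univ x
  show Pv C f x + Pv D f x = f x
  rw [Pv_apply, Pv_apply]
  by_cases hC : x ∈ C
  · have hD : x ∉ D := fun hD => Set.eq_empty_iff_forall_notMem.mp hI x ⟨hC, hD⟩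
    rw [Set.indicator_of_mem hC, Set.indicator_of_notMem hD, add_zero]
  · have hD : x ∈ D := hx.resolve_left hC
    rw [Set.indicator_of_notMem hC, Set.indicator_of_mem hD, zero_add]

theorem Pv_eq_zero_of_not_mem {S : Set Γ} {x : Γ} (h : x ∉ S) (f : l2 Γ) : Pv S f x = 0 := by
  rw [Pv_apply, Set.indicator_of_notMem h]

/-- the `a_j` support lemma -/
theorem a_support {C D : Set Γ} (hU : C ∪ D = Set.univ)
    {f : Γ} (hf : (fun x => f * x) '' C ∩ C = ∅) (g : Γ) (ξ : l2 Γ) {x : Γ}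
    (hx : x ∉ (fun y => g * y) '' D) :
    lam Γ (g * f * g⁻¹) (Pv ((fun y => g * y) '' C) ξ) x = 0 := by
  rw [lam_apply]
  refine Pv_eq_zero_of_not_mem (fun hmem => hx ?_) ξ
  rw [mem_mulimg] at hmem
  -- hmem : g⁻¹ * ((g * f * g⁻¹)⁻¹ * x) ∈ C
  have h1 : g⁻¹ * ((g * f * g⁻¹)⁻¹ * x) = f⁻¹ * (g⁻¹ * x) := by group
  rw [h1] at hmem
  have hfc : f * (f⁻¹ * (g⁻¹ * x)) ∈ (fun y => f * y) '' C := ⟨_, hmem, rfl⟩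
  have hfc' : g⁻¹ * x ∈ (fun y => f * y) '' C := by
    simpa [mul_assoc] using hfc
  have hnotC : g⁻¹ * x ∉ C := fun hC =>
    Set.eq_empty_iff_forall_notMem.mp hf _ ⟨hfc', hC⟩
  have hD : g⁻¹ * x ∈ D := by
    have : g⁻¹ * x ∈ C ∪ D := hU ▸ Set.mem_univ _
    exact this.resolve_left hnotC
  exact mem_mulimg.mpr (by simpa using hD)

theorem sum_sq_Pv_le {N : ℕ} (Dj : Fin N → Set Γ)
    (hd : ∀ j k, j ≠ k → Dj j ∩ Dj k = ∅) (ξ : l2 Γ) :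
    ∑ j : Fin N, ‖Pv (Dj j) ξ‖ ^ 2 ≤ ‖ξ‖ ^ 2 := by
  classical
  have horth : ∀ j ∈ Finset.univ, ∀ k ∈ Finset.univ, j ≠ k →
      inner (𝕜 := ℂ) (Pv (Dj j) ξ) (Pv (Dj k) ξ) = 0 := by
    intro j _ k _ hjk
    refine inner_eq_zero_of_disj _ _ fun x => ?_
    by_cases hj : x ∈ Dj j
    · right
      exact Pv_eq_zero_of_not_mem
        (fun hk => Set.eq_empty_iff_forall_notMem.mp (hd j k hjk) x ⟨hj, hk⟩) ξ
    · left; exact Pv_eq_zero_of_not_mem hj ξ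
  rw [← norm_sum_sq Finset.univ _ horth]
  have hsum : ∑ j : Fin N, Pv (Dj j) ξ = Pv (⋃ j, Dj j) ξ := by
    refine lp.ext (funext fun x => ?_)
    show (∑ j : Fin N, Pv (Dj j) ξ : l2 Γ) x = _
    rw [lp.coeFn_sum]
    simp only [Finset.sum_apply]
    by_cases hx : x ∈ ⋃ j, Dj j
    · obtain ⟨j₀, hj₀⟩ := Set.mem_iUnion.mp hx
      rw [Pv_apply, Set.indicator_of_mem hx]
      rw [Finset.sum_eq_single j₀ (fun k _ hk => Pv_eq_zero_of_not_mem
        (fun hxk => Set.eq_empty_iff_forall_notMem.mp (hd k j₀ hk) x ⟨hxk, hj₀⟩) ξ)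
        (fun h => absurd (Finset.mem_univ j₀) h)]
      rw [Pv_apply, Set.indicator_of_mem hj₀]
    · rw [Pv_apply, Set.indicator_of_notMem hx]
      refine Finset.sum_eq_zero fun j _ => Pv_eq_zero_of_not_mem (fun hj => hx ?_) ξ
      exact Set.mem_iUnion.mpr ⟨j, hj⟩
  rw [hsum]
  have h1 := Pv_norm_le (⋃ j, Dj j) ξ
  have h0 : (0:ℝ) ≤ ‖Pv (⋃ j, Dj j) ξ‖ := norm_nonneg _
  nlinarith

theorem key_norm_le {N : ℕ} {C D : Set Γ} (hU : C ∪ D = Set.univ) (hI : C ∩ D = ∅)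
    {f : Γ} (hf : (fun x => f * x) '' C ∩ C = ∅)
    {g : Fin N → Γ}
    (hg : ∀ j k : Fin N, j ≠ k → (fun x => g j * x) '' D ∩ (fun x => g k * x) '' D = ∅) :
    ‖∑ j : Fin N, lam Γ (g j * f * (g j)⁻¹)‖ ≤ 2 * Real.sqrt N := by
  refine ContinuousLinearMap.opNorm_le_bound _ (by positivity) fun ξ => ?_
  set Cj : Fin N → Set Γ := fun j => (fun x => g j * x) '' C with hCj
  set Dj : Fin N → Set Γ := fun j => (fun x => g j * x) '' D with hDj
  -- partition of each image
  have hpartj : ∀ j, Pv (Cj j) ξ + Pv (Dj j) ξ = ξ := by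
    intro j
    refine Pv_partition ?_ ?_ ξ
    · ext x
      simp only [Set.mem_union, Set.mem_univ, iff_true, hCj, hDj, mem_mulimg]
      have : (g j)⁻¹ * x ∈ C ∪ D := hU ▸ Set.mem_univ _
      exact this
    · ext x
      simp only [Set.mem_inter_iff, Set.mem_empty_iff_false, iff_false, hCj, hDj, mem_mulimg]
      rintro ⟨h1, h2⟩
      exact Set.eq_empty_iff_forall_notMem.mp hI _ ⟨h1, h2⟩
  set T : Fin N → (l2 Γ →L[ℂ] l2 Γ) := fun j => lam Γ (g j * f * (g j)⁻¹) with hT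
  have hdecomp : (∑ j : Fin N, T j) ξ
      = (∑ j : Fin N, T j (Pv (Cj j) ξ)) + ∑ j : Fin N, T j (Pv (Dj j) ξ) := by
    rw [ContinuousLinearMap.sum_apply, ← Finset.sum_add_distrib]
    refine Finset.sum_congr rfl fun j _ => ?_
    rw [← map_add, hpartj j]
  -- norms of pieces
  have hTnorm : ∀ (j) (η : l2 Γ), ‖T j η‖ = ‖η‖ := fun j η => lam_norm_apply _ η
  -- a-part
  have ha : ‖∑ j : Fin N, T j (Pv (Cj j) ξ)‖ ≤ Real.sqrt N * ‖ξ‖ := by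
    have horth : ∀ j ∈ Finset.univ, ∀ k ∈ (Finset.univ : Finset (Fin N)), j ≠ k →
        inner (𝕜 := ℂ) (T j (Pv (Cj j) ξ)) (T k (Pv (Cj k) ξ)) = 0 := by
      intro j _ k _ hjk
      refine inner_eq_zero_of_disj _ _ fun x => ?_
      by_cases hj : x ∈ Dj j
      · right
        refine a_support hU hf (g k) ξ (fun hk => ?_)
        exact Set.eq_empty_iff_forall_notMem.mp (hg j k hjk) x ⟨hj, hk⟩
      · left
        exact a_support hU hf (g j) ξ hj
    have hsq : ‖∑ j : Fin N, T j (Pv (Cj j) ξ)‖ ^ 2 ≤ (N : ℝ) * ‖ξ‖ ^ 2 := by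
      rw [norm_sum_sq Finset.univ _ horth]
      calc ∑ j : Fin N, ‖T j (Pv (Cj j) ξ)‖ ^ 2
          ≤ ∑ _j : Fin N, ‖ξ‖ ^ 2 := by
            refine Finset.sum_le_sum fun j _ => ?_
            rw [hTnorm]
            have := Pv_norm_le (Cj j) ξ
            nlinarith [norm_nonneg (Pv (Cj j) ξ)]
        _ = (N : ℝ) * ‖ξ‖ ^ 2 := by simp [Finset.sum_const, nsmul_eq_mul]
    have h1 := Real.sqrt_le_sqrt hsq
    rw [Real.sqrt_sq (norm_nonneg _), Real.sqrt_mul (Nat.cast_nonneg N),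
      Real.sqrt_sq (norm_nonneg ξ)] at h1
    exact h1
  -- b-part
  have hb : ‖∑ j : Fin N, T j (Pv (Dj j) ξ)‖ ≤ Real.sqrt N * ‖ξ‖ := by
    have h1 : ‖∑ j : Fin N, T j (Pv (Dj j) ξ)‖ ≤ ∑ j : Fin N, ‖Pv (Dj j) ξ‖ := by
      refine (norm_sum_le _ _).trans ?_
      exact Finset.sum_le_sum fun j _ => le_of_eq (hTnorm j _)
    have h2 : (∑ j : Fin N, ‖Pv (Dj j) ξ‖) ^ 2 ≤ (N : ℝ) * ∑ j : Fin N, ‖Pv (Dj j) ξ‖ ^ 2 := by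
      have := sq_sum_le_card_mul_sum_sq (s := (Finset.univ : Finset (Fin N)))
        (f := fun j => ‖Pv (Dj j) ξ‖)
      simpa using this
    have h3 : ∑ j : Fin N, ‖Pv (Dj j) ξ‖ ^ 2 ≤ ‖ξ‖ ^ 2 := by
      refine sum_sq_Pv_le Dj (fun j k hjk => ?_) ξ
      exact hg j k hjk
    have h4 : (∑ j : Fin N, ‖Pv (Dj j) ξ‖) ^ 2 ≤ (N : ℝ) * ‖ξ‖ ^ 2 := by
      refine h2.trans ?_
      exact mul_le_mul_of_nonneg_left h3 (Nat.cast_nonneg N)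
    have h5 := Real.sqrt_le_sqrt h4
    rw [Real.sqrt_sq (Finset.sum_nonneg fun j _ => norm_nonneg _),
      Real.sqrt_mul (Nat.cast_nonneg N), Real.sqrt_sq (norm_nonneg ξ)] at h5
    exact h1.trans h5
  rw [hdecomp]
  calc ‖(∑ j : Fin N, T j (Pv (Cj j) ξ)) + ∑ j : Fin N, T j (Pv (Dj j) ξ)‖
      ≤ ‖∑ j : Fin N, T j (Pv (Cj j) ξ)‖ + ‖∑ j : Fin N, T j (Pv (Dj j) ξ)‖ := norm_add_le _ _
    _ ≤ Real.sqrt N * ‖ξ‖ + Real.sqrt N * ‖ξ‖ := add_le_add ha hb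
    _ = 2 * Real.sqrt N * ‖ξ‖ := by ring

theorem deltaE_apply_self : deltaE Γ (1:Γ) = 1 := by
  letI := Classical.decEq Γ
  exact lp.single_apply_self (E := fun _ : Γ => ℂ) 2 (1:Γ) (1:ℂ)

theorem deltaE_apply_ne {x : Γ} (h : x ≠ 1) : deltaE Γ x = 0 := by
  letI := Classical.decEq Γ
  exact lp.single_apply_ne (E := fun _ : Γ => ℂ) 2 (1:Γ) (1:ℂ) h

theorem deltaE_norm : ‖deltaE Γ‖ = 1 := by
  letI := Classical.decEq Γ
  have := lp.norm_single (p := 2) (E := fun _ : Γ => ℂ)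
    (by norm_num) 1 (1:ℂ)
  simpa [deltaE] using this

open Classical in
theorem trace_lam (γ : Γ) :
    inner (𝕜 := ℂ) (lam Γ γ (deltaE Γ)) (deltaE Γ) = if γ = 1 then 1 else 0 := by
  rw [lp.inner_eq_tsum]
  rw [tsum_eq_single (1:Γ) (fun x hx => by
    rw [deltaE_apply_ne hx, inner_zero_right])]
  rw [lam_apply]
  have : inner (𝕜 := ℂ) (deltaE Γ (γ⁻¹ * 1)) (deltaE Γ 1)
      = (starRingEnd ℂ) (deltaE Γ γ⁻¹) * deltaE Γ 1 := by
    rw [mul_one]; exact RCLike.inner_apply' _ _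
  rw [this, deltaE_apply_self, mul_one]
  by_cases h : γ = 1
  · subst h; simp [deltaE_apply_self]
  · rw [if_neg h, deltaE_apply_ne (by simpa using h), map_zero]

theorem trace_bound (T : l2 Γ →L[ℂ] l2 Γ) :
    ‖inner (𝕜 := ℂ) (T (deltaE Γ)) (deltaE Γ)‖ ≤ ‖T‖ := by
  calc ‖inner (𝕜 := ℂ) (T (deltaE Γ)) (deltaE Γ)‖
      ≤ ‖T (deltaE Γ)‖ * ‖deltaE Γ‖ := norm_inner_le_norm _ _
    _ ≤ ‖T‖ * ‖deltaE Γ‖ * ‖deltaE Γ‖ := by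
        have := T.le_opNorm (deltaE Γ)
        nlinarith [norm_nonneg (deltaE Γ), norm_nonneg T]
    _ = ‖T‖ := by rw [deltaE_norm]; ring

end PowersAux

open PowersAux in
theorem powers_group_average_conjugates_small {Γ : Type*} [Group Γ]
    (hP : IsPowersGroup Γ) (X : l2 Γ →L[ℂ] l2 Γ) (hX : X ∈ Cred Γ)
    (htr : inner (𝕜 := ℂ) (X (deltaE Γ)) (deltaE Γ) = 0) :
    ∀ δ : ℝ, 0 < δ →
      ∃ N : ℕ, 1 ≤ N ∧ ∃ g : Fin N → Γ,
        ‖(N : ℂ)⁻¹ • ∑ j : Fin N, lam Γ (g j) * X * lam Γ ((g j)⁻¹)‖ < δ := by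
  classical
  intro δ hδ
  -- approximate X by an element of the span
  obtain ⟨Y, hYmem, hYX⟩ : ∃ Y ∈ (Submodule.span ℂ (Set.range (lam Γ)) :
      Set (l2 Γ →L[ℂ] l2 Γ)), ‖X - Y‖ < δ/4 := by
    have := Metric.mem_closure_iff.mp hX (δ/4) (by linarith)
    obtain ⟨Y, hY1, hY2⟩ := this
    exact ⟨Y, hY1, by rwa [dist_eq_norm] at hY2⟩
  obtain ⟨c, hc⟩ := Finsupp.mem_span_range_iff_exists_finsupp.mp hYmem
  set F : Finset Γ := c.support.erase 1 with hF
  set M : ℝ := ∑ γ ∈ F, ‖c γ‖ with hM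
  have hM0 : 0 ≤ M := Finset.sum_nonneg fun _ _ => norm_nonneg _
  set Y' : l2 Γ →L[ℂ] l2 Γ := ∑ γ ∈ F, c γ • lam Γ γ with hY'
  -- Y = Y' + c 1 • 1
  have hYsplit : Y = Y' + c 1 • lam Γ 1 := by
    rw [← hc, Finsupp.sum]
    by_cases h1 : (1:Γ) ∈ c.support
    · rw [← Finset.sum_erase_add _ _ h1]
    · rw [Finset.erase_eq_of_notMem h1] at hF
      rw [Finsupp.notMem_support_iff.mp h1, zero_smul, add_zero, hY', hF]
  -- the trace of Y is conj (c 1)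
  have htrY : inner (𝕜 := ℂ) (Y (deltaE Γ)) (deltaE Γ) = (starRingEnd ℂ) (c 1) := by
    rw [← hc, Finsupp.sum]
    have happ : ((∑ γ ∈ c.support, c γ • lam Γ γ) (deltaE Γ))
        = ∑ γ ∈ c.support, c γ • (lam Γ γ (deltaE Γ)) := by
      rw [ContinuousLinearMap.sum_apply]
      exact Finset.sum_congr rfl fun γ _ => rfl
    rw [happ, sum_inner]
    have : ∀ γ ∈ c.support, inner (𝕜 := ℂ) (c γ • lam Γ γ (deltaE Γ)) (deltaE Γ)
        = (starRingEnd ℂ) (c γ) * (if γ = 1 then 1 else 0) := by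
      intro γ _
      rw [inner_smul_left, trace_lam]
    rw [Finset.sum_congr rfl this]
    simp only [mul_ite, mul_one, mul_zero, Finset.sum_ite_eq' c.support (1:Γ)]
    by_cases h1 : (1:Γ) ∈ c.support
    · rw [if_pos h1]
    · rw [if_neg h1, Finsupp.notMem_support_iff.mp h1, map_zero]
  -- |c 1| small
  have hc1 : ‖c 1‖ ≤ ‖X - Y‖ := by
    have h1 : inner (𝕜 := ℂ) ((X - Y) (deltaE Γ)) (deltaE Γ)
        = - (starRingEnd ℂ) (c 1) := by
      have : (X - Y) (deltaE Γ) = X (deltaE Γ) - Y (deltaE Γ) := rfl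
      rw [this, inner_sub_left, htr, htrY, zero_sub]
    have h2 := trace_bound (Γ := Γ) (X - Y)
    rw [h1, norm_neg, RCLike.norm_conj] at h2
    exact h2
  -- X ≈ Y'
  have hXY' : ‖X - Y'‖ ≤ δ/2 := by
    have h1 : X - Y' = (X - Y) + c 1 • lam Γ 1 := by
      rw [hYsplit]; abel
    rw [h1]
    refine (norm_add_le _ _).trans ?_
    have h2 : ‖c 1 • lam Γ 1‖ ≤ ‖c 1‖ := by
      refine (ContinuousLinearMap.opNorm_smul_le (c 1) (lam Γ 1)).trans ?_
      rw [lam_one]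
      calc ‖c 1‖ * ‖(1 : l2 Γ →L[ℂ] l2 Γ)‖ ≤ ‖c 1‖ * 1 := by
            gcongr
            exact ContinuousLinearMap.norm_id_le
        _ = ‖c 1‖ := mul_one _
    have := hc1
    linarith
  -- choose N
  obtain ⟨N, hN⟩ := exists_nat_gt (max 1 ((4*M/δ)^2))
  have hN1r : (1:ℝ) < N := lt_of_le_of_lt (le_max_left _ _) hN
  have hN1 : 1 ≤ N := by exact_mod_cast hN1r.le
  have hNpos : (0:ℝ) < N := by linarith
  have hsqrtN : 4*M/δ < Real.sqrt N := by
    have h1 : ((4*M/δ)^2 : ℝ) < N := lt_of_le_of_lt (le_max_right _ _) hN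
    have := Real.sqrt_lt_sqrt (by positivity) h1
    rwa [Real.sqrt_sq (by positivity)] at this
  have hsqrtNpos : 0 < Real.sqrt N := Real.sqrt_pos.mpr hNpos
  -- apply Powers property
  have hF1 : (1:Γ) ∉ F := Finset.notMem_erase _ _
  obtain ⟨C, D, g, hU, hI, hfC, hgD⟩ := hP F hF1 N hN1
  refine ⟨N, hN1, g, ?_⟩
  -- decompose the average
  have hsplit : ∑ j : Fin N, lam Γ (g j) * X * lam Γ ((g j)⁻¹)
      = (∑ j : Fin N, lam Γ (g j) * Y' * lam Γ ((g j)⁻¹))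
        + ∑ j : Fin N, lam Γ (g j) * (X - Y') * lam Γ ((g j)⁻¹) := by
    rw [← Finset.sum_add_distrib]
    refine Finset.sum_congr rfl fun j _ => ?_
    rw [mul_sub, sub_mul]
    abel
  have step1 : ∀ j : Fin N, lam Γ (g j) * Y' * lam Γ ((g j)⁻¹)
      = ∑ γ ∈ F, c γ • lam Γ (g j * γ * (g j)⁻¹) := by
    intro j
    rw [hY', Finset.mul_sum, Finset.sum_mul]
    refine Finset.sum_congr rfl fun γ _ => ?_
    rw [mul_smul_comm, smul_mul_assoc, ← lam_mul, ← lam_mul]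
  have hS1 : (∑ j : Fin N, lam Γ (g j) * Y' * lam Γ ((g j)⁻¹))
      = ∑ γ ∈ F, c γ • ∑ j : Fin N, lam Γ (g j * γ * (g j)⁻¹) := by
    rw [Finset.sum_congr rfl (fun j _ => step1 j), Finset.sum_comm]
    exact Finset.sum_congr rfl fun γ _ => (Finset.smul_sum).symm
  have hS1norm : ‖∑ j : Fin N, lam Γ (g j) * Y' * lam Γ ((g j)⁻¹)‖
      ≤ 2 * Real.sqrt N * M := by
    rw [hS1]
    refine (norm_sum_le _ _).trans ?_
    calc ∑ γ ∈ F, ‖c γ • ∑ j : Fin N, lam Γ (g j * γ * (g j)⁻¹)‖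
        ≤ ∑ γ ∈ F, ‖c γ‖ * (2 * Real.sqrt N) := by
          refine Finset.sum_le_sum fun γ hγ => ?_
          refine (ContinuousLinearMap.opNorm_smul_le (c γ) _).trans ?_
          exact mul_le_mul_of_nonneg_left (key_norm_le hU hI (hfC γ hγ) hgD)
            (norm_nonneg _)
      _ = 2 * Real.sqrt N * M := by rw [hM, ← Finset.sum_mul]; ring
  have hS2norm : ‖∑ j : Fin N, lam Γ (g j) * (X - Y') * lam Γ ((g j)⁻¹)‖
      ≤ (N:ℝ) * ‖X - Y'‖ := by
    refine (norm_sum_le _ _).trans ?_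
    calc ∑ j : Fin N, ‖lam Γ (g j) * (X - Y') * lam Γ ((g j)⁻¹)‖
        ≤ ∑ _j : Fin N, ‖X - Y'‖ := by
          refine Finset.sum_le_sum fun j _ => ?_
          calc ‖lam Γ (g j) * (X - Y') * lam Γ ((g j)⁻¹)‖
              ≤ ‖lam Γ (g j) * (X - Y')‖ * ‖lam Γ ((g j)⁻¹)‖ :=
                ContinuousLinearMap.opNorm_comp_le _ _
            _ ≤ ‖lam Γ (g j)‖ * ‖X - Y'‖ * ‖lam Γ ((g j)⁻¹)‖ := by
                gcongr
                exact ContinuousLinearMap.opNorm_comp_le _ _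
            _ ≤ 1 * ‖X - Y'‖ * 1 := by
                gcongr
                exacts [lam_opNorm_le _, lam_opNorm_le _]
            _ = ‖X - Y'‖ := by ring
      _ = (N:ℝ) * ‖X - Y'‖ := by
          rw [Finset.sum_const, Finset.card_univ, Fintype.card_fin, nsmul_eq_mul]
  -- final bound
  have hnorminv : ‖((N:ℂ))⁻¹‖ = (N:ℝ)⁻¹ := by
    rw [norm_inv, Complex.norm_natCast]
  calc ‖(N : ℂ)⁻¹ • ∑ j : Fin N, lam Γ (g j) * X * lam Γ ((g j)⁻¹)‖
      ≤ ‖((N:ℂ))⁻¹‖ * ‖∑ j : Fin N, lam Γ (g j) * X * lam Γ ((g j)⁻¹)‖ :=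
        ContinuousLinearMap.opNorm_smul_le _ _
    _ ≤ (N:ℝ)⁻¹ * (2 * Real.sqrt N * M + (N:ℝ) * ‖X - Y'‖) := by
        rw [hnorminv]
        refine mul_le_mul_of_nonneg_left ?_ (by positivity)
        rw [hsplit]
        exact (norm_add_le _ _).trans (add_le_add hS1norm hS2norm)
    _ = 2 * M / Real.sqrt N + ‖X - Y'‖ := by
        have hNsq : Real.sqrt N * Real.sqrt N = (N:ℝ) := Real.mul_self_sqrt hNpos.le
        have e1 : ((N:ℝ))⁻¹ * (2 * Real.sqrt N * M) = 2 * M / Real.sqrt N := by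
          rw [eq_div_iff hsqrtNpos.ne']
          calc _ = ((N:ℝ))⁻¹ * (Real.sqrt N * Real.sqrt N) * (2 * M) := by ring
            _ = 2 * M := by rw [hNsq, inv_mul_cancel₀ hNpos.ne', one_mul]
        have e2 : ((N:ℝ))⁻¹ * ((N:ℝ) * ‖X - Y'‖) = ‖X - Y'‖ := by
          rw [← mul_assoc, inv_mul_cancel₀ hNpos.ne', one_mul]
        rw [mul_add, e1, e2]
    _ < δ := by
        have h2M : 2 * M / Real.sqrt N < δ / 2 := by
          rw [div_lt_iff₀ hsqrtNpos]
          have : δ / 2 * (4 * M / δ) < δ / 2 * Real.sqrt N :=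
            mul_lt_mul_of_pos_left hsqrtN (by linarith)
          have heq : δ / 2 * (4 * M / δ) = 2 * M := by field_simp; ring
          linarith
        linarith
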